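/- Let F : ℝ^m → ℝ^n be twice continuously differentiable with F(θ*) = 0 at some point θ*, and suppose the Jacobian J_F has constant rank r on a neighborhood U of θ*, so that M = {θ ∈ U : F(θ) = 0} is (locally) an embedded submanifold. Then there exist an open neighborhood W ⊆ U of θ* and a constant c > 0 such that for every θ ∈ W, ‖F(θ)‖₂ ≥ c · dist(θ, M), where dist(θ, M) denotes the Euclidean distance from θ to the zero set M. -/

import Mathlib

open Module Metric Set Filter

set_option maxHeartbeats 1000000

/-- Auxiliary general version over abstract finite-dimensional real inner product spaces. -/
theorem aux_residual_bound {E N : Type*} [NormedAddCommGroup E] [InnerProductSpace ℝ E]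
    [NormedAddCommGroup N] [InnerProductSpace ℝ N] [FiniteDimensional ℝ E]
    [FiniteDimensional ℝ N]
    (F : E → N) (θstar : E) (r : ℕ) (U : Set E)
    (hF : ContDiff ℝ 2 F) (hFzero : F θstar = 0) (hU_open : IsOpen U) (hθU : θstar ∈ U)
    (hrank : ∀ θ ∈ U, finrank ℝ (LinearMap.range (fderiv ℝ F θ).toLinearMap) = r) :
    ∃ (W : Set E) (c : ℝ), IsOpen W ∧ W ⊆ U ∧ θstar ∈ W ∧ 0 < c ∧
      ∀ θ ∈ W, ‖F θ‖ ≥ c * Metric.infDist θ {θ' ∈ U | F θ' = 0} := by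
  classical
  set T : E → (E →L[ℝ] N) := fun θ => fderiv ℝ F θ with hT
  set J : E →L[ℝ] N := T θstar with hJdef
  set R : Submodule ℝ N := LinearMap.range J.toLinearMap with hRdef
  set P : N →L[ℝ] R := Submodule.orthogonalProjection R with hPdef
  set K : Submodule ℝ E := LinearMap.ker J.toLinearMap with hKdef
  set Q : E →L[ℝ] K := Submodule.orthogonalProjection K with hQdef
  have hFdiff : Differentiable ℝ F := hF.differentiable (by norm_num)
  have hdF : ∀ θ, HasFDerivAt F (T θ) θ := fun θ => (hFdiff θ).hasFDerivAt
  -- P is norm-nonincreasing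
  have hPnorm : ∀ u : N, ‖P u‖ ≤ ‖u‖ := by
    intro u
    calc ‖P u‖ ≤ ‖P‖ * ‖u‖ := P.le_opNorm u
      _ ≤ 1 * ‖u‖ := by
          have := Submodule.orthogonalProjection_norm_le R
          gcongr
      _ = ‖u‖ := one_mul _
  -- P is the identity on R
  have hPid : ∀ u : N, ∀ hu : u ∈ R, P u = ⟨u, hu⟩ := by
    intro u hu
    simpa using Submodule.orthogonalProjection_mem_subspace_eq_self (K := R) ⟨u, hu⟩
  have hQid : ∀ u : E, ∀ hu : u ∈ K, Q u = ⟨u, hu⟩ := by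
    intro u hu
    simpa using Submodule.orthogonalProjection_mem_subspace_eq_self (K := K) ⟨u, hu⟩
  -- Lemma A : near θstar, `P ∘ DF θ` and `DF θ` have the same kernel
  have lemA : ∃ V : Set E, IsOpen V ∧ θstar ∈ V ∧ V ⊆ U ∧
      ∀ θ ∈ V, ∀ v : E, P (T θ v) = 0 → T θ v = 0 := by
    have hrankJ : finrank ℝ R = r := hrank θstar hθU
    -- the set of maps whose projected rank is at least r is open
    have hSopen : IsOpen {L : E →L[ℝ] N | (r : Cardinal) ≤ LinearMap.rank ((P.comp L : E →L[ℝ] R) : E →ₗ[ℝ] R)} := by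
      have h1 := isOpen_setOf_nat_le_rank (𝕜 := ℝ) (E := E) (F := (R : Type _)) r
      have h2 : Continuous fun L : E →L[ℝ] N => P.comp L :=
        (ContinuousLinearMap.compL ℝ E N R P).continuous
      exact h1.preimage h2
    -- J belongs to this set
    have hJS : (r : Cardinal) ≤ LinearMap.rank ((P.comp J : E →L[ℝ] R) : E →ₗ[ℝ] R) := by
      have h1 : LinearMap.range ((P.comp J : E →L[ℝ] R) : E →ₗ[ℝ] R) = ⊤ := by
        rw [Submodule.eq_top_iff']
        intro y
        obtain ⟨x, hx⟩ := y.2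
        refine ⟨x, ?_⟩
        have h := hPid (J x) (LinearMap.mem_range_self _ x)
        show P (J x) = y
        rw [h]
        exact Subtype.ext hx
      rw [LinearMap.rank, h1, rank_top]
      rw [← hrankJ, finrank_eq_rank']
    -- V is the preimage of this open set intersected with U
    have hTc : Continuous T := hF.continuous_fderiv (by norm_num)
    refine ⟨U ∩ T ⁻¹' {L : E →L[ℝ] N |
        (r : Cardinal) ≤ LinearMap.rank ((P.comp L : E →L[ℝ] R) : E →ₗ[ℝ] R)},
      hU_open.inter (hSopen.preimage hTc), ⟨hθU, hJS⟩, inter_subset_left, ?_⟩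
    rintro θ ⟨hθU', hθS⟩ v hPv
    set L : E →L[ℝ] N := T θ with hLdef
    set Lc : E →ₗ[ℝ] R := ((P.comp L : E →L[ℝ] R) : E →ₗ[ℝ] R) with hLcdef
    have hrangeL : finrank ℝ (LinearMap.range (L : E →ₗ[ℝ] N)) = r := hrank θ hθU'
    -- the projected rank equals r
    have h_up : r ≤ finrank ℝ (LinearMap.range Lc) := by
      have h1 : LinearMap.rank Lc = (finrank ℝ (LinearMap.range Lc) : Cardinal) :=
        (finrank_eq_rank' (K := ℝ) (V := LinearMap.range Lc)).symm
      have h2 : (r : Cardinal) ≤ (finrank ℝ (LinearMap.range Lc) : Cardinal) := h1 ▸ hθS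
      exact_mod_cast h2
    have h_dn : finrank ℝ (LinearMap.range Lc) ≤ r := by
      have h1 : Lc = (P : N →ₗ[ℝ] R).comp (L : E →ₗ[ℝ] N) := by
        rw [hLcdef]; rfl
      rw [h1, LinearMap.range_comp, ← hrangeL]
      exact Submodule.finrank_map_le _ _
    have hrange_eq : finrank ℝ (LinearMap.range Lc) = r := le_antisymm h_dn h_up
    -- kernels coincide
    have hkerle : LinearMap.ker (L : E →ₗ[ℝ] N) ≤ LinearMap.ker Lc := by
      intro w hw
      have hw' : L w = 0 := hw
      show P (L w) = 0
      rw [hw', map_zero]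
    have hfr1 := LinearMap.finrank_range_add_finrank_ker (L : E →ₗ[ℝ] N)
    have hfr2 := LinearMap.finrank_range_add_finrank_ker Lc
    have hkereq : LinearMap.ker (L : E →ₗ[ℝ] N) = LinearMap.ker Lc := by
      refine Submodule.eq_of_le_of_finrank_eq hkerle ?_
      omega
    have hv : v ∈ LinearMap.ker Lc := hPv
    rw [← hkereq] at hv
    exact hv
  obtain ⟨V, hVopen, hθV, hVU, hVker⟩ := lemA
  -- the map Φ and its derivative
  set DΦ : E → (E →L[ℝ] (R × K)) := fun θ => ((P.comp (T θ)).prod Q) with hDΦdef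
  set Φ : E → R × K := fun θ => (P (F θ), Q θ) with hΦdef
  have hΦd : ∀ θ, HasFDerivAt Φ (DΦ θ) θ := fun θ =>
    ((P.hasFDerivAt.comp θ (hdF θ)).prodMk Q.hasFDerivAt)
  have hΦc : ContDiff ℝ 2 Φ := (P.contDiff.comp hF).prodMk Q.contDiff
  -- DΦ θstar is bijective
  have hinj : Function.Injective (DΦ θstar) := by
    rw [injective_iff_map_eq_zero]
    intro v hv
    have h1 : P (J v) = 0 := congrArg Prod.fst hv
    have h2 : Q v = 0 := congrArg Prod.snd hv
    have hJv : J v ∈ R := LinearMap.mem_range_self _ v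
    rw [hPid _ hJv] at h1
    have hJv0 : J v = 0 := congrArg Subtype.val h1
    have hvK : v ∈ K := hJv0
    rw [hQid _ hvK] at h2
    exact congrArg Subtype.val h2
  have hdim : finrank ℝ E = finrank ℝ (R × K) := by
    rw [Module.finrank_prod]
    exact (LinearMap.finrank_range_add_finrank_ker (J : E →ₗ[ℝ] N)).symm
  set Φequiv : E ≃L[ℝ] R × K :=
    (LinearMap.linearEquivOfInjective ((DΦ θstar : E →L[ℝ] R × K) : E →ₗ[ℝ] R × K)
      hinj hdim).toContinuousLinearEquiv with hΦequivdef
  have hcoe : (Φequiv : E →L[ℝ] R × K) = DΦ θstar := by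
    refine ContinuousLinearMap.ext fun v => ?_
    exact LinearMap.linearEquivOfInjective_apply hinj hdim v
  have hΦd' : HasFDerivAt Φ (Φequiv : E →L[ℝ] R × K) θstar := hcoe ▸ hΦd θstar
  have h12 : (1 : WithTop ℕ∞) ≤ 2 := one_le_two
  have h20 : (2 : WithTop ℕ∞) ≠ 0 := by norm_num
  -- local inverse
  set Ψ : R × K → E := hΦc.contDiffAt.localInverse hΦd' h20 with hΨdef
  set homeo : OpenPartialHomeomorph E (R × K) :=
    hΦc.contDiffAt.toOpenPartialHomeomorph Φ hΦd' h20 with hhomeodef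
  have hΨsymm : Ψ = homeo.symm := rfl
  have hΨc : ContDiffAt ℝ 2 Ψ (Φ θstar) := hΦc.contDiffAt.to_localInverse hΦd' h20
  have hθsource : θstar ∈ homeo.source :=
    hΦc.contDiffAt.mem_toOpenPartialHomeomorph_source hΦd' h20
  have hp₀target : Φ θstar ∈ homeo.target :=
    hΦc.contDiffAt.image_mem_toOpenPartialHomeomorph_target hΦd' h20
  have hhomeocoe : (homeo : E → R × K) = Φ := rfl
  set p₀ : R × K := Φ θstar with hp₀def
  have hΨp₀ : Ψ p₀ = θstar := hΦc.contDiffAt.localInverse_apply_image hΦd' h20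
  -- eventual smoothness of Ψ and local Lipschitz property
  have hΨev : ∀ᶠ p in nhds p₀, ContDiffAt ℝ 2 Ψ p := hΨc.eventually (by simp)
  obtain ⟨Lip, t, htmem, hlip⟩ := (hΨc.of_le h12).exists_lipschitzOnWith
  -- choose a good ball around p₀
  have hVΨ : Ψ ⁻¹' V ∈ nhds p₀ := by
    have : ContinuousAt Ψ p₀ := hΨc.continuousAt
    exact this.preimage_mem_nhds (hVopen.mem_nhds (hΨp₀ ▸ hθV))
  have hgood : homeo.target ∩ (Ψ ⁻¹' V) ∩ t ∩ {p | ContDiffAt ℝ 2 Ψ p} ∈ nhds p₀ := by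
    refine inter_mem (inter_mem (inter_mem ?_ hVΨ) htmem) hΨev
    exact homeo.open_target.mem_nhds hp₀target
  obtain ⟨ε, hεpos, hball⟩ := Metric.mem_nhds_iff.1 hgood
  have hballtarget : Metric.ball p₀ ε ⊆ homeo.target := fun p hp => (hball hp).1.1.1
  have hballV : Metric.ball p₀ ε ⊆ Ψ ⁻¹' V := fun p hp => (hball hp).1.1.2
  have hballt : Metric.ball p₀ ε ⊆ t := fun p hp => (hball hp).1.2
  have hballsmooth : ∀ p ∈ Metric.ball p₀ ε, ContDiffAt ℝ 2 Ψ p := fun p hp => (hball hp).2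
  -- on the ball, DΦ(Ψ p) ∘ DΨ p = id
  have hDinv : ∀ p ∈ Metric.ball p₀ ε,
      (DΦ (Ψ p)).comp (fderiv ℝ Ψ p) = ContinuousLinearMap.id ℝ (R × K) := by
    intro p hp
    have hΨdiff : DifferentiableAt ℝ Ψ p := (hballsmooth p hp).differentiableAt h20
    have h1 : HasFDerivAt (Φ ∘ Ψ) ((DΦ (Ψ p)).comp (fderiv ℝ Ψ p)) p :=
      (hΦd (Ψ p)).comp p hΨdiff.hasFDerivAt
    have h2 : (Φ ∘ Ψ) =ᶠ[nhds p] id := by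
      filter_upwards [homeo.open_target.mem_nhds (hballtarget hp)] with q hq
      exact homeo.right_inv hq
    calc (DΦ (Ψ p)).comp (fderiv ℝ Ψ p) = fderiv ℝ (Φ ∘ Ψ) p := h1.fderiv.symm
      _ = fderiv ℝ (id : R × K → R × K) p := h2.fderiv_eq
      _ = ContinuousLinearMap.id ℝ (R × K) := fderiv_id
  -- F vanishes on the zero slice
  set z₀ : K := Q θstar with hz₀def
  have hp₀eq : p₀ = ((0 : R), z₀) := by
    rw [hp₀def]
    simp [hΦdef, hFzero]
    exact hz₀def.symm
  have hinball : ∀ z ∈ Metric.ball z₀ ε, ((0 : R), z) ∈ Metric.ball p₀ ε := by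
    intro z hz
    rw [Metric.mem_ball, hp₀eq, Prod.dist_eq]
    simp only [dist_self]
    rw [max_lt_iff]
    exact ⟨hεpos, by simpa [Metric.mem_ball] using hz⟩
  set g : K → N := fun z => F (Ψ ((0 : R), z)) with hgdef
  have hgderiv : ∀ z ∈ Metric.ball z₀ ε, HasFDerivAt g (0 : K →L[ℝ] N) z := by
    intro z hz
    have hpz : ((0 : R), z) ∈ Metric.ball p₀ ε := hinball z hz
    set θ' : E := Ψ ((0 : R), z) with hθ'def
    have hΨdiff : DifferentiableAt ℝ Ψ ((0 : R), z) :=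
      (hballsmooth _ hpz).differentiableAt h20
    set inrK : K →L[ℝ] R × K := ContinuousLinearMap.inr ℝ R K with hinr
    have hinr_at : HasFDerivAt (fun z : K => ((0 : R), z)) inrK z := inrK.hasFDerivAt
    have hcomp : HasFDerivAt g
        ((T θ').comp ((fderiv ℝ Ψ ((0 : R), z)).comp inrK)) z :=
      (hdF θ').comp z (hΨdiff.hasFDerivAt.comp z hinr_at)
    have hzero : (T θ').comp ((fderiv ℝ Ψ ((0 : R), z)).comp inrK) = 0 := by
      ext w
      have hid := hDinv _ hpz
      have happ : (DΦ θ') ((fderiv ℝ Ψ ((0 : R), z)) (inrK w)) = inrK w := by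
        have h := congrArg (fun (L : (R × K) →L[ℝ] (R × K)) => L (inrK w)) hid
        simp only [ContinuousLinearMap.coe_comp', Function.comp_apply,
          ContinuousLinearMap.id_apply] at h
        exact h
      have hfst : P (T θ' ((fderiv ℝ Ψ ((0 : R), z)) (inrK w))) = 0 := by
        have h := congrArg Prod.fst happ
        simp only [hDΦdef, ContinuousLinearMap.prod_apply, ContinuousLinearMap.coe_comp',
          Function.comp_apply, ContinuousLinearMap.inr_apply] at h
        exact h
      have hker := hVker θ' (hballV hpz) _ hfst
      simp only [ContinuousLinearMap.coe_comp', Function.comp_apply,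
        ContinuousLinearMap.zero_apply]
      exact hker
    rwa [hzero] at hcomp
  have hslice : ∀ z ∈ Metric.ball z₀ ε, F (Ψ ((0 : R), z)) = 0 := by
    intro z hz
    have hz₀mem : z₀ ∈ Metric.ball z₀ ε := Metric.mem_ball_self hεpos
    have hconst : g z = g z₀ := by
      refine (convex_ball z₀ ε).is_const_of_fderivWithin_eq_zero (𝕜 := ℝ)
        (fun y hy => ((hgderiv y hy).differentiableAt).differentiableWithinAt) ?_ hz hz₀mem
      intro y hy
      rw [fderivWithin_of_isOpen Metric.isOpen_ball hy]
      exact (hgderiv y hy).fderiv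
    have hg0 : g z₀ = 0 := by
      show F (Ψ ((0 : R), z₀)) = 0
      rw [← hp₀eq, hΨp₀, hFzero]
    show g z = 0
    rw [hconst, hg0]
  -- assemble
  refine ⟨Φ ⁻¹' (Metric.ball p₀ ε) ∩ homeo.source ∩ V, ((Lip : ℝ) + 1)⁻¹, ?_, ?_, ?_, ?_, ?_⟩
  · exact ((Metric.isOpen_ball.preimage hΦc.continuous).inter homeo.open_source).inter hVopen
  · exact fun θ hθ => hVU hθ.2
  · refine ⟨⟨?_, hθsource⟩, hθV⟩
    exact Metric.mem_ball_self hεpos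
  · positivity
  · intro θ hθ
    obtain ⟨⟨hθball, hθsource'⟩, hθV'⟩ := hθ
    set x : R := (Φ θ).1 with hxdef
    set z : K := (Φ θ).2 with hzdef
    have hθball' : Φ θ ∈ Metric.ball p₀ ε := hθball
    have hzball : z ∈ Metric.ball z₀ ε := by
      rw [Metric.mem_ball]
      calc dist z z₀ ≤ dist (Φ θ) p₀ := by
            rw [hp₀eq, Prod.dist_eq]; exact le_max_right _ _
        _ < ε := hθball'
    have h0z : ((0 : R), z) ∈ Metric.ball p₀ ε := hinball z hzball
    set θ' : E := Ψ ((0 : R), z) with hθ'def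
    have hθ'M : θ' ∈ {θ' ∈ U | F θ' = 0} := ⟨hVU (hballV h0z), hslice z hzball⟩
    have hleft : Ψ (Φ θ) = θ := homeo.left_inv hθsource'
    have hd1 : Metric.infDist θ {θ' ∈ U | F θ' = 0} ≤ dist θ θ' :=
      Metric.infDist_le_dist_of_mem hθ'M
    have hd2 : dist θ θ' ≤ (Lip : ℝ) * dist (Φ θ) ((0 : R), z) := by
      have := LipschitzOnWith.dist_le_mul hlip (Φ θ) (hballt hθball') ((0 : R), z) (hballt h0z)
      rw [hleft] at this
      exact this
    have hd3 : dist (Φ θ) ((0 : R), z) = ‖x‖ := by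
      rw [Prod.dist_eq]
      simp [hxdef, hzdef, dist_eq_norm]
    have hd4 : ‖x‖ ≤ ‖F θ‖ := by
      rw [hxdef]
      exact hPnorm (F θ)
    have hLip0 : (0 : ℝ) ≤ Lip := Lip.coe_nonneg
    have hstep : (Lip : ℝ) * dist (Φ θ) ((0 : R), z) ≤ ((Lip : ℝ) + 1) * ‖F θ‖ := by
      rw [hd3]
      calc (Lip : ℝ) * ‖x‖ ≤ (Lip : ℝ) * ‖F θ‖ := mul_le_mul_of_nonneg_left hd4 hLip0
        _ ≤ ((Lip : ℝ) + 1) * ‖F θ‖ :=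
            mul_le_mul_of_nonneg_right (by linarith) (norm_nonneg (F θ))
    have hchain : Metric.infDist θ {θ' ∈ U | F θ' = 0} ≤ ((Lip : ℝ) + 1) * ‖F θ‖ :=
      hd1.trans (hd2.trans hstep)
    rw [ge_iff_le]
    have hc : (0 : ℝ) < ((Lip : ℝ) + 1) := by positivity
    calc ((Lip : ℝ) + 1)⁻¹ * Metric.infDist θ {θ' ∈ U | F θ' = 0}
        ≤ ((Lip : ℝ) + 1)⁻¹ * (((Lip : ℝ) + 1) * ‖F θ‖) := by
          gcongr
      _ = ‖F θ‖ := by field_simp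

/-- **Residual lower bound by the distance to the zero set.**
If `F : ℝ^m → ℝ^n` is `C²` with `F(θ*) = 0` and its Jacobian has constant rank `r` on a
neighborhood `U` of `θ*`, then, with `M = {θ ∈ U : F(θ) = 0}`, there are an open
neighborhood `W ⊆ U` of `θ*` and a constant `c > 0` such that
`‖F(θ)‖ ≥ c * dist(θ, M)` for all `θ ∈ W`. -/
theorem residual_bounds_distance_to_zero_set
    (m n : ℕ) (F : EuclideanSpace ℝ (Fin m) → EuclideanSpace ℝ (Fin n))
    (θstar : EuclideanSpace ℝ (Fin m)) (r : ℕ) (U : Set (EuclideanSpace ℝ (Fin m)))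
    (hF : ContDiff ℝ 2 F)
    (hFzero : F θstar = 0)
    (hU_open : IsOpen U) (hθU : θstar ∈ U)
    (hrank : ∀ θ ∈ U, Module.finrank ℝ (LinearMap.range (fderiv ℝ F θ).toLinearMap) = r) :
    ∃ (W : Set (EuclideanSpace ℝ (Fin m))) (c : ℝ), IsOpen W ∧ W ⊆ U ∧ θstar ∈ W ∧ 0 < c ∧
      ∀ θ ∈ W, ‖F θ‖ ≥ c * Metric.infDist θ {θ' ∈ U | F θ' = 0} := by
  exact aux_residual_bound F θstar r U hF hFzero hU_open hθU hrank
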